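/- Let A₁, …, A_{2k} be (m+n)×(m+n) odd block matrices (zero diagonal blocks with respect to the m,n decomposition), where 2k ≥ 2. Then the supertrace of the full symmetrization vanishes: str(Σ_{σ ∈ S_{2k}} A_{σ(1)} ⋯ A_{σ(2k)}) = 0, where str([[P,Q],[R,S]]) = Tr(P) - Tr(S). -/

import Mathlib

open Matrix

/-- The supertrace of a block matrix over `Fin m ⊕ Fin n`. -/
def str {m n : ℕ} {R : Type*} [CommRing R]
    (M : Matrix (Fin m ⊕ Fin n) (Fin m ⊕ Fin n) R) : R :=
  Matrix.trace M.toBlocks₁₁ - Matrix.trace M.toBlocks₂₂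

section Aux

variable {m n : ℕ} {R : Type*} [CommRing R]

/-- Odd block matrices. -/
def IsOddBlock (M : Matrix (Fin m ⊕ Fin n) (Fin m ⊕ Fin n) R) : Prop :=
  ∃ B C, M = Matrix.fromBlocks 0 B C 0

/-- Even (block-diagonal) matrices. -/
def IsEvenBlock (M : Matrix (Fin m ⊕ Fin n) (Fin m ⊕ Fin n) R) : Prop :=
  ∃ P S, M = Matrix.fromBlocks P 0 0 S

lemma odd_mul_odd {X Y : Matrix (Fin m ⊕ Fin n) (Fin m ⊕ Fin n) R}
    (hX : IsOddBlock X) (hY : IsOddBlock Y) : IsEvenBlock (X * Y) := by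
  obtain ⟨B, C, rfl⟩ := hX
  obtain ⟨D, E, rfl⟩ := hY
  exact ⟨B * E, C * D, by simp [Matrix.fromBlocks_multiply]⟩

lemma odd_mul_even {X Y : Matrix (Fin m ⊕ Fin n) (Fin m ⊕ Fin n) R}
    (hX : IsOddBlock X) (hY : IsEvenBlock Y) : IsOddBlock (X * Y) := by
  obtain ⟨B, C, rfl⟩ := hX
  obtain ⟨P, S, rfl⟩ := hY
  exact ⟨B * S, C * P, by simp [Matrix.fromBlocks_multiply]⟩

lemma str_odd_mul_comm {X Y : Matrix (Fin m ⊕ Fin n) (Fin m ⊕ Fin n) R}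
    (hX : IsOddBlock X) (hY : IsOddBlock Y) : str (Y * X) = - str (X * Y) := by
  obtain ⟨B, C, rfl⟩ := hX
  obtain ⟨D, E, rfl⟩ := hY
  simp only [str, Matrix.fromBlocks_multiply, Matrix.toBlocks_fromBlocks₁₁,
    Matrix.toBlocks_fromBlocks₂₂, Matrix.mul_zero, Matrix.zero_mul, add_zero, zero_add,
    Matrix.trace_mul_comm B E, Matrix.trace_mul_comm C D]
  ring

lemma parity_list_prod (L : List (Matrix (Fin m ⊕ Fin n) (Fin m ⊕ Fin n) R))
    (h : ∀ M ∈ L, IsOddBlock M) :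
    (Even L.length → IsEvenBlock L.prod) ∧ (Odd L.length → IsOddBlock L.prod) := by
  induction L with
  | nil =>
    refine ⟨fun _ => ⟨1, 1, by simp [Matrix.fromBlocks_one]⟩, fun hodd => ?_⟩
    simp at hodd
  | cons X T ih =>
    obtain ⟨ihe, iho⟩ := ih (fun M hM => h M (by simp [hM]))
    constructor
    · intro he
      have : Odd T.length := by
        simp only [List.length_cons] at he
        rcases Nat.even_or_odd T.length with h' | h'
        · exact absurd he (by simp [Nat.even_add_one, h'])
        · exact h'
      rw [List.prod_cons]
      exact odd_mul_odd (h X (by simp)) (iho this)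
    · intro ho
      have : Even T.length := by
        simp only [List.length_cons] at ho
        rcases Nat.even_or_odd T.length with h' | h'
        · exact h'
        · exact absurd ho (by simp [Nat.odd_add_one, h'])
      rw [List.prod_cons]
      exact odd_mul_even (h X (by simp)) (ihe this)

lemma odd_list_prod {L : List (Matrix (Fin m ⊕ Fin n) (Fin m ⊕ Fin n) R)}
    (h : ∀ M ∈ L, IsOddBlock M) (hL : Odd L.length) : IsOddBlock L.prod :=
  (parity_list_prod L h).2 hL

end Aux

lemma str_add {m n : ℕ} {R : Type*} [CommRing R]
    (M N : Matrix (Fin m ⊕ Fin n) (Fin m ⊕ Fin n) R) : str (M + N) = str M + str N := by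
  simp [str, Matrix.toBlocks₁₁, Matrix.toBlocks₂₂, Matrix.trace, Matrix.diag,
    Finset.sum_add_distrib]
  ring

lemma str_zero {m n : ℕ} {R : Type*} [CommRing R] :
    str (0 : Matrix (Fin m ⊕ Fin n) (Fin m ⊕ Fin n) R) = 0 := by
  simp [str, Matrix.toBlocks₁₁, Matrix.toBlocks₂₂, Matrix.trace, Matrix.diag]

lemma str_sum {m n : ℕ} {R : Type*} [CommRing R] {ι : Type*} (s : Finset ι)
    (f : ι → Matrix (Fin m ⊕ Fin n) (Fin m ⊕ Fin n) R) :
    str (∑ i ∈ s, f i) = ∑ i ∈ s, str (f i) := by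
  classical
  induction s using Finset.induction with
  | empty => simp [str_zero]
  | insert _ _ hx ih => simp [Finset.sum_insert hx, str_add, ih]

/-- Key single-rotation step. -/
lemma str_rotate {m n : ℕ} {R : Type*} [CommRing R] (N : ℕ) (hN : Odd N)
    (B : Fin (N + 1) → Matrix (Fin m ⊕ Fin n) (Fin m ⊕ Fin n) R)
    (hB : ∀ i, IsOddBlock (B i)) :
    str (List.ofFn fun i => B (finRotate (N + 1) i)).prod
      = - str (List.ofFn B).prod := by
  have h1 : (List.ofFn fun i => B (finRotate (N + 1) i))
      = (List.ofFn fun i : Fin N => B i.succ).concat (B 0) := by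
    rw [List.ofFn_succ']
    have hfun : (fun i : Fin N => B ((finRotate (N + 1)) i.castSucc))
        = fun i : Fin N => B i.succ := by
      funext i
      rw [finRotate_succ_apply, Fin.coeSucc_eq_succ]
    rw [finRotate_last, hfun]
  have h2 : (List.ofFn B) = B 0 :: (List.ofFn fun i : Fin N => B i.succ) := List.ofFn_succ
  have hT : IsOddBlock (List.ofFn fun i : Fin N => B i.succ).prod := by
    apply odd_list_prod
    · intro M hM
      rw [List.mem_ofFn] at hM
      obtain ⟨i, rfl⟩ := hM
      exact hB _
    · simpa using hN
  rw [h1, h2, List.prod_concat, List.prod_cons]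
  exact str_odd_mul_comm (hB 0) hT

theorem aux_main {m n : ℕ} {R : Type*} [CommRing R] (N : ℕ) (hEv : Even N) (h2 : 2 ≤ N)
    (A : Fin N → Matrix (Fin m ⊕ Fin n) (Fin m ⊕ Fin n) R)
    (hA : ∀ i, IsOddBlock (A i)) :
    str (∑ σ : Equiv.Perm (Fin N), (List.ofFn fun i => A (σ i)).prod) = 0 := by
  classical
  obtain ⟨M, rfl⟩ : ∃ M, N = M + 1 := ⟨N - 1, by omega⟩
  have hModd : Odd M := by
    rcases hEv with ⟨t, ht⟩
    exact ⟨t - 1, by omega⟩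
  set rot : Equiv.Perm (Fin (M + 1)) := finRotate (M + 1) with hrot
  set P : Equiv.Perm (Fin (M + 1)) → R :=
    fun σ => str (List.ofFn fun i => A (σ i)).prod with hP
  have hstep : ∀ σ, P (σ * rot) = - P σ := by
    intro σ
    have := str_rotate M hModd (fun i => A (σ i)) (fun i => hA _)
    simpa only [P, Equiv.Perm.mul_apply, List.ofFn_succ, List.prod_cons] using this
  have hpow : ∀ (σ : Equiv.Perm (Fin (M + 1))) (j : ℕ), P (σ * rot ^ j) = (-1) ^ j * P σ := by
    intro σ j
    induction j with
    | zero => simp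
    | succ j ih =>
      rw [pow_succ, ← mul_assoc, hstep, ih]
      ring
  have hord : orderOf rot = M + 1 := by
    rw [hrot, (isCycle_finRotate_of_le h2).orderOf, support_finRotate_of_le h2]
    simp
  -- sum over each coset is zero
  rw [str_sum]
  set H : Subgroup (Equiv.Perm (Fin (M + 1))) := Subgroup.zpowers rot with hH
  rw [← Fintype.sum_fiberwise (QuotientGroup.mk (s := H)) P]
  apply Finset.sum_eq_zero
  intro q _
  have hfin : IsOfFinOrder rot := isOfFinOrder_of_finite rot
  let e : H ≃ {σ : Equiv.Perm (Fin (M + 1)) // (QuotientGroup.mk σ : _ ⧸ H) = q} :=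
    { toFun := fun h => ⟨q.out * h, by
        rw [QuotientGroup.mk_mul_of_mem _ h.2, QuotientGroup.out_eq']⟩
      invFun := fun σ => ⟨q.out⁻¹ * σ, by
        have hq : (QuotientGroup.mk q.out : _ ⧸ H) = QuotientGroup.mk σ.1 := by
          rw [QuotientGroup.out_eq', σ.2]
        exact QuotientGroup.eq.mp hq⟩
      left_inv := fun h => by ext; simp
      right_inv := fun σ => by ext; simp }
  have key : (∑ h : H, P (q.out * h)) = 0 := by
    have step1 : (∑ h : H, P (q.out * h))
        = ∑ j : Fin (orderOf rot), P (q.out * rot ^ (j : ℕ)) :=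
      (Fintype.sum_equiv (finEquivZPowers hfin)
        (fun j => P (q.out * rot ^ (j : ℕ))) (fun h => P (q.out * h))
        (fun j => by rw [finEquivZPowers_apply])).symm
    rw [step1]
    have step2 : ∀ j : Fin (orderOf rot),
        P (q.out * rot ^ (j : ℕ)) = (-1) ^ (j : ℕ) * P q.out := fun j => hpow q.out j
    rw [Finset.sum_congr rfl (fun j _ => step2 j), ← Finset.sum_mul]
    have hsum : (∑ j : Fin (orderOf rot), (-1 : R) ^ (j : ℕ)) = 0 := by
      rw [Fin.sum_univ_eq_sum_range, neg_one_geom_sum, hord]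
      simp [hEv]
    rw [hsum, zero_mul]
  calc (∑ σ : {σ : Equiv.Perm (Fin (M + 1)) // (QuotientGroup.mk σ : _ ⧸ H) = q}, P σ.1)
      = ∑ h : H, P (q.out * h) :=
        (Fintype.sum_equiv e (fun h => P (q.out * h)) (fun σ => P σ.1) (fun h => rfl)).symm
    _ = 0 := key

theorem str_sym_even_odd {m n k : ℕ} {R : Type*} [CommRing R] (hk : 1 ≤ k)
    (A : Fin (2 * k) → Matrix (Fin m ⊕ Fin n) (Fin m ⊕ Fin n) R)
    (hA : ∀ i, A i = Matrix.fromBlocks 0 (A i).toBlocks₁₂ (A i).toBlocks₂₁ 0) :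
    str (∑ σ : Equiv.Perm (Fin (2 * k)), (List.ofFn fun i => A (σ i)).prod) = 0 := by
  exact aux_main (2 * k) ⟨k, by ring⟩ (by omega) A (fun i => ⟨_, _, hA i⟩)
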